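/- Let λ, μ ∈ ℂ with λ ≠ 0 and μ⁸ = −λ. Define a₁ = (7λ−9)μ²/(−λ), a₂ = 15(λ−1)μ⁴/(−λ), a₃ = (9λ−7)μ⁶/(−λ). Then the dihedral invariants u₁ = a₁⁴ + a₃⁴, u₂ = (a₁² + a₃²)a₂, u₃ = 2a₁a₃ satisfy: u₃ = −2(7λ−9)(9λ−7)/λ, u₂ = −15(λ−1)²(81λ² − 94λ + 81)/λ², and u₁ = −((7λ−9)⁴ + λ²(9λ−7)⁴)/λ³. -/

import Mathlib

/-- Dihedral invariants of the `D₁₂` family of genus 3 hyperelliptic curves. -/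
theorem D12_dihedral_invariants (lam mu : ℂ) (hlam : lam ≠ 0) (hmu : mu ^ 8 = -lam)
    (a₁ a₂ a₃ u₁ u₂ u₃ : ℂ)
    (ha₁ : a₁ = (7 * lam - 9) * mu ^ 2 / (-lam))
    (ha₂ : a₂ = 15 * (lam - 1) * mu ^ 4 / (-lam))
    (ha₃ : a₃ = (9 * lam - 7) * mu ^ 6 / (-lam))
    (hu₁ : u₁ = a₁ ^ 4 + a₃ ^ 4) (hu₂ : u₂ = (a₁ ^ 2 + a₃ ^ 2) * a₂)
    (hu₃ : u₃ = 2 * a₁ * a₃) :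
    u₃ = -2 * (7 * lam - 9) * (9 * lam - 7) / lam ∧
    u₂ = -15 * (lam - 1) ^ 2 * (81 * lam ^ 2 - 94 * lam + 81) / lam ^ 2 ∧
    u₁ = -((7 * lam - 9) ^ 4 + lam ^ 2 * (9 * lam - 7) ^ 4) / lam ^ 3 := by
  have h16 : mu ^ 16 = lam ^ 2 := by
    have h : mu ^ 16 = (mu ^ 8) ^ 2 := by ring
    rw [h, hmu]; ring
  have h24 : mu ^ 24 = -lam ^ 3 := by
    have h : mu ^ 24 = (mu ^ 8) ^ 3 := by ring
    rw [h, hmu]; ring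
  subst ha₁ ha₂ ha₃ hu₁ hu₂ hu₃
  have e1 : ((7 * lam - 9) * mu ^ 2 / (-lam)) ^ 4 = -(7 * lam - 9) ^ 4 / lam ^ 3 := by
    rw [div_pow, show ((7 * lam - 9) * mu ^ 2) ^ 4 = (7 * lam - 9) ^ 4 * mu ^ 8 by ring, hmu,
      show ((-lam : ℂ)) ^ 4 = lam ^ 4 by ring]
    field_simp
  have e3 : ((9 * lam - 7) * mu ^ 6 / (-lam)) ^ 4 = -(9 * lam - 7) ^ 4 / lam := by
    rw [div_pow, show ((9 * lam - 7) * mu ^ 6) ^ 4 = (9 * lam - 7) ^ 4 * mu ^ 24 by ring, h24,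
      show ((-lam : ℂ)) ^ 4 = lam ^ 4 by ring]
    field_simp
  refine ⟨?_, ?_, ?_⟩
  · field_simp
    linear_combination (63 * lam ^ 2 - 130 * lam + 63) * hmu
  · field_simp
    linear_combination (81-207*lam+175*lam^2-49*lam^3) * hmu +
      (49-175*lam+207*lam^2-81*lam^3) * h16
  · rw [e1, e3]
    field_simp
    ring
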